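/- Let M be an ε-differentially private mechanism answering adaptively-chosen threshold queries over [T] with (α, β)-accuracy where α < 1/2. Then there is an ε-differentially private algorithm M' : [T]^n → [T] that makes at most ⌈1 + log₂ T⌉ adaptive threshold queries to M (via binary search) and outputs an α-approximate median of its input with probability at least 1 − β. -/

import Mathlib

open MeasureTheory Finset

/-- The threshold query `c_t(x) = (1/n)|{i : x_i ≤ t}|` on a dataset `x ∈ [T]^n`. -/
noncomputable def thresholdQ {n T : ℕ} (x : Fin n → Fin T) (t : Fin T) : ℝ :=
  ((Finset.univ.filter (fun i => x i ≤ t)).card : ℝ) / n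

/-- `y` is an α-approximate median of `x ∈ [T]^n`. -/
def approxMedian {n T : ℕ} (α : ℝ) (x : Fin n → Fin T) (y : Fin T) : Prop :=
  (1 / 2 - α) * n ≤ ((Finset.univ.filter (fun i => x i ≤ y)).card : ℝ) ∧
  (1 / 2 - α) * n ≤ ((Finset.univ.filter (fun i => y ≤ x i)).card : ℝ)

/-- Round a real answer to a bit: is it at least 1/2? -/
noncomputable def rdB (a : ℝ) : Bool := decide ((1:ℝ)/2 ≤ a)

lemma measurable_rdB : Measurable rdB := by
  refine measurable_to_countable fun y => ?_
  by_cases h : (1:ℝ)/2 ≤ y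
  · have : rdB ⁻¹' {rdB y} = Set.Ici ((1:ℝ)/2) := by
      ext a
      simp only [rdB, Set.mem_preimage, Set.mem_singleton_iff, decide_eq_decide, Set.mem_Ici]
      exact ⟨fun h2 => h2.mpr h, fun h2 => iff_of_true h2 h⟩
    rw [this]; exact measurableSet_Ici
  · have : rdB ⁻¹' {rdB y} = Set.Iio ((1:ℝ)/2) := by
      ext a
      simp only [rdB, Set.mem_preimage, Set.mem_singleton_iff, decide_eq_decide, Set.mem_Iio]
      exact ⟨fun h2 => not_le.mp (fun hh => h (h2.mp hh)), fun h2 => iff_of_false (not_le.mpr h2) h⟩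
    rw [this]; exact measurableSet_Iio

/-- One step of binary search on the state `(ℓ+1, u)`. -/
def bsStep (s : ℕ × ℕ) (b : Bool) : ℕ × ℕ :=
  if s.1 < s.2 then
    (if b then (s.1, (s.1 + s.2) / 2) else ((s.1 + s.2) / 2 + 1, s.2))
  else s

/-- Running binary search from the initial state `(0, T-1)` on a list of bits. -/
def bsRun (T : ℕ) (bs : List Bool) : ℕ × ℕ := bs.foldl bsStep (0, T - 1)

/-- Clamping a natural number into `Fin T`. -/
def toFinT (T : ℕ) (hT : 0 < T) (m : ℕ) : Fin T := ⟨min m (T-1), by omega⟩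

/-- The binary-search adversary: queries the midpoint of the current interval. -/
noncomputable def bsA (T : ℕ) (hT : 0 < T) (l : List ℝ) : Fin T :=
  toFinT T hT (((bsRun T (l.map rdB)).1 + (bsRun T (l.map rdB)).2) / 2)

/-- The output function: the final upper endpoint. -/
noncomputable def bsF (T : ℕ) (hT : 0 < T) (K : ℕ) (as : Fin K → ℝ) : Fin T :=
  toFinT T hT (bsRun T ((List.ofFn as).map rdB)).2

lemma measurable_bsF (T : ℕ) (hT : 0 < T) (K : ℕ) : Measurable (bsF T hT K) := by
  have : bsF T hT K =
      (fun bs : Fin K → Bool => toFinT T hT (bsRun T (List.ofFn bs)).2) ∘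
        (fun as j => rdB (as j)) := by
    funext as
    simp [bsF, Function.comp, List.map_ofFn, Function.comp_def]
  rw [this]
  exact (measurable_of_countable _).comp
    (measurable_pi_lambda _ fun j => measurable_rdB.comp (measurable_pi_apply j))

lemma bsStep_gap (s : ℕ × ℕ) (b : Bool) :
    (bsStep s b).2 - (bsStep s b).1 ≤ (s.2 - s.1) / 2 := by
  unfold bsStep
  split
  · cases b <;> simp <;> omega
  · omega

lemma bsRun_gap (T : ℕ) (bs : List Bool) :
    (bsRun T bs).2 - (bsRun T bs).1 ≤ (T - 1) / 2 ^ bs.length := by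
  induction bs using List.reverseRecOn with
  | nil => simp [bsRun]
  | append_singleton l b ih =>
      have h1 : bsRun T (l ++ [b]) = bsStep (bsRun T l) b := by
        simp [bsRun]
      have h2 := bsStep_gap (bsRun T l) b
      rw [h1]
      calc (bsStep (bsRun T l) b).2 - (bsStep (bsRun T l) b).1
          ≤ ((bsRun T l).2 - (bsRun T l).1) / 2 := h2
        _ ≤ ((T - 1) / 2 ^ l.length) / 2 := Nat.div_le_div_right ih
        _ = (T - 1) / 2 ^ (l ++ [b]).length := by
            rw [Nat.div_div_eq_div_mul]
            simp [pow_succ]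

/-- binary-search reduction: Let `K = ⌈1 + log₂ T⌉`.  Suppose `M` is
an adaptive mechanism for threshold queries over `[T]`: for every adversary
`A : List ℝ → Fin T` (choosing the next threshold from the past answers) and dataset
`x ∈ [T]^n`, `M A x` is a probability distribution over the transcript of `K` answers,
which is ε-differentially private (for every adversary) and `(α,β)`-accurate, i.e. with
probability at least `1 - β` every answer `a_j` is within `α` of `c_{t_j}(x)` where
`t_j = A(a_1,…,a_{j-1})`.  Then there is an ε-differentially private algorithm
`M' : [T]^n → [T]` that outputs an α-approximate median with probability `≥ 1 - β`. -/
theorem stmt11 (T n : ℕ) (hT : 2 ≤ T) (hn : 1 ≤ n) (α β ε : ℝ)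
    (hα0 : 0 < α) (hα : α < 1 / 2) (hβ0 : 0 < β) (hβ1 : β < 1) (hε : 0 < ε)
    (K : ℕ) (hK : K = Nat.ceil (1 + Real.logb 2 T))
    (M : (List ℝ → Fin T) → (Fin n → Fin T) → Measure (Fin K → ℝ))
    (hprob : ∀ A x, IsProbabilityMeasure (M A x))
    (hdp : ∀ (A : List ℝ → Fin T) (x x' : Fin n → Fin T),
      (∃ i, ∀ j, j ≠ i → x j = x' j) →
      ∀ R : Set (Fin K → ℝ), M A x R ≤ ENNReal.ofReal (Real.exp ε) * M A x' R)
    (hacc : ∀ (A : List ℝ → Fin T) (x : Fin n → Fin T),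
      ENNReal.ofReal (1 - β) ≤ M A x {as : Fin K → ℝ |
        ∀ j : Fin K, |as j - thresholdQ x (A ((List.ofFn as).take j))| ≤ α}) :
    ∃ M' : (Fin n → Fin T) → Measure (Fin T),
      (∀ x, IsProbabilityMeasure (M' x)) ∧
      (∀ x x' : Fin n → Fin T, (∃ i, ∀ j, j ≠ i → x j = x' j) →
        ∀ R : Set (Fin T), M' x R ≤ ENNReal.ofReal (Real.exp ε) * M' x' R) ∧
      (∀ x : Fin n → Fin T,
        ENNReal.ofReal (1 - β) ≤ M' x {y : Fin T | approxMedian α x y}) := by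
  have hT0 : 0 < T := by omega
  have hn0 : (0:ℝ) < n := by exact_mod_cast hn
  -- T ≤ 2 ^ K
  have hTK : T ≤ 2 ^ K := by
    have h1 : Real.logb 2 T ≤ (K:ℝ) := by
      have h := Nat.le_ceil (1 + Real.logb 2 T)
      rw [← hK] at h
      linarith
    have hTpos : (0:ℝ) < T := by exact_mod_cast hT0
    have h2 : (T:ℝ) ≤ (2:ℝ) ^ (K:ℝ) := by
      calc (T:ℝ) = (2:ℝ) ^ Real.logb 2 T := (Real.rpow_logb (by norm_num) (by norm_num) hTpos).symm
        _ ≤ (2:ℝ) ^ (K:ℝ) := Real.rpow_le_rpow_of_exponent_le (by norm_num) h1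
    rw [Real.rpow_natCast] at h2
    exact_mod_cast h2
  -- the key correctness lemma
  have key : ∀ (x : Fin n → Fin T) (as : Fin K → ℝ),
      (∀ j : Fin K, |as j - thresholdQ x (bsA T hT0 ((List.ofFn as).take j))| ≤ α) →
      approxMedian α x (bsF T hT0 K as) := by
    intro x as hAcc
    set s : ℕ → ℕ × ℕ := fun k => bsRun T (((List.ofFn as).take k).map rdB) with hs
    have hstep : ∀ k (hk : k < K), s (k+1) = bsStep (s k) (rdB (as ⟨k, hk⟩)) := by
      intro k hk
      have htake : (List.ofFn as).take (k+1) = (List.ofFn as).take k ++ [as ⟨k, hk⟩] := by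
        rw [List.take_succ, List.getElem?_ofFn]
        simp [List.ofFnNthVal, hk]
      have hmap : ((List.ofFn as).take (k+1)).map rdB
          = ((List.ofFn as).take k).map rdB ++ [rdB (as ⟨k, hk⟩)] := by
        rw [htake, List.map_append]; rfl
      show bsRun T (((List.ofFn as).take (k+1)).map rdB)
          = bsStep (bsRun T (((List.ofFn as).take k).map rdB)) (rdB (as ⟨k, hk⟩))
      rw [hmap]
      simp only [bsRun, List.foldl_append, List.foldl_cons, List.foldl_nil]
    -- count of elements ≤ t, as a real
    have hcount_top : (Finset.univ.filter (fun i => x i ≤ toFinT T hT0 (T-1))).card = n := by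
      rw [Finset.filter_true_of_mem, Finset.card_univ, Fintype.card_fin]
      intro i _
      show (x i : ℕ) ≤ min (T-1) (T-1)
      have := (x i).isLt
      omega
    -- the invariant
    have inv : ∀ k, k ≤ K →
        (s k).1 ≤ (s k).2 ∧ (s k).2 ≤ T - 1 ∧
        (1/2 - α ≤ thresholdQ x (toFinT T hT0 (s k).2)) ∧
        ((s k).1 = 0 ∨ thresholdQ x (toFinT T hT0 ((s k).1 - 1)) ≤ 1/2 + α) := by
      intro k
      induction k with
      | zero =>
          intro _
          have hs0 : s 0 = (0, T-1) := by simp [hs, bsRun]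
          refine ⟨by simp [hs0], by simp [hs0], ?_, Or.inl (by simp [hs0])⟩
          rw [hs0]
          show 1/2 - α ≤ thresholdQ x (toFinT T hT0 (T-1))
          rw [thresholdQ, hcount_top]
          rw [div_self (ne_of_gt hn0)]
          linarith
      | succ k ih =>
          intro hk1
          have hk : k < K := by omega
          obtain ⟨h12, h2T, hup, hlo⟩ := ih (by omega)
          have hS := hstep k hk
          by_cases hlt : (s k).1 < (s k).2
          · set m := ((s k).1 + (s k).2) / 2 with hm
            have hmb : (s k).1 ≤ m ∧ m < (s k).2 := by constructor <;> omega
            -- the queried threshold at step k is toFinT T hT0 m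
            have hQ : bsA T hT0 ((List.ofFn as).take k) = toFinT T hT0 m := by
              simp only [bsA, ← hs, hm]
              rfl
            have hacck := hAcc ⟨k, hk⟩
            simp only [Fin.val_mk] at hacck
            rw [hQ] at hacck
            rw [abs_le] at hacck
            cases hb : rdB (as ⟨k, hk⟩) with
            | true =>
                have hv : (1:ℝ)/2 ≤ as ⟨k, hk⟩ := by
                  simpa [rdB] using hb
                have hS' : s (k+1) = ((s k).1, m) := by
                  rw [hS, hb, hm]; simp [bsStep, hlt]
                rw [hS']
                refine ⟨by omega, by omega, ?_, ?_⟩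
                · show 1/2 - α ≤ thresholdQ x (toFinT T hT0 m)
                  linarith [hacck.1]
                · exact hlo
            | false =>
                have hv : as ⟨k, hk⟩ < (1:ℝ)/2 := by
                  have := of_decide_eq_false hb
                  simpa [rdB] using hb
                have hS' : s (k+1) = (m + 1, (s k).2) := by
                  rw [hS, hb, hm]; simp [bsStep, hlt]
                rw [hS']
                refine ⟨by omega, by omega, hup, Or.inr ?_⟩
                show thresholdQ x (toFinT T hT0 (m + 1 - 1)) ≤ 1/2 + α
                have : m + 1 - 1 = m := by omega
                rw [this]
                linarith [hacck.2]
          · have hS' : s (k+1) = s k := by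
              rw [hS, bsStep, if_neg hlt]
            rw [hS']
            exact ⟨h12, h2T, hup, hlo⟩
    -- at step K the interval has collapsed
    obtain ⟨h12, h2T, hup, hlo⟩ := inv K le_rfl
    have hgapK : (s K).2 - (s K).1 = 0 := by
      have hlen : (((List.ofFn as).take K).map rdB).length = K := by
        simp
      have h : (s K).2 - (s K).1 ≤ (T - 1) / 2 ^ K := by
        have h := bsRun_gap T (((List.ofFn as).take K).map rdB)
        rw [hlen] at h
        exact h
      have : (T - 1) / 2 ^ K = 0 := Nat.div_eq_of_lt (by omega)
      omega
    have heq : (s K).1 = (s K).2 := by omega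
    set u := (s K).2 with hu
    have hfF : bsF T hT0 K as = toFinT T hT0 u := by
      have htk : (List.ofFn as).take K = List.ofFn as := by
        have := List.take_length (l := List.ofFn as)
        simpa using this
      show toFinT T hT0 (bsRun T ((List.ofFn as).map rdB)).2 = toFinT T hT0 (s K).2
      rw [show s K = bsRun T (((List.ofFn as).take K).map rdB) from rfl, htk]
    rw [hfF]
    -- first condition
    have hfirst : (1/2 - α) * n ≤
        ((Finset.univ.filter (fun i => x i ≤ toFinT T hT0 u)).card : ℝ) := by
      have := hup
      rw [thresholdQ, le_div_iff₀ hn0] at this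
      exact this
    refine ⟨hfirst, ?_⟩
    -- second condition
    by_cases hu0 : u = 0
    · have hall : (Finset.univ.filter (fun i => toFinT T hT0 u ≤ x i)) = Finset.univ := by
        apply Finset.filter_true_of_mem
        intro i _
        show min u (T-1) ≤ (x i : ℕ)
        omega
      rw [hall, Finset.card_univ, Fintype.card_fin]
      nlinarith
    · have hu1 : 1 ≤ u := by omega
      have hlo' : thresholdQ x (toFinT T hT0 (u - 1)) ≤ 1/2 + α := by
        rcases hlo with h | h
        · exact absurd (heq.symm.trans h) hu0
        · rwa [heq] at h
      have hcard : ((Finset.univ.filter (fun i => x i ≤ toFinT T hT0 (u-1))).card : ℝ)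
          ≤ (1/2 + α) * n := by
        rw [thresholdQ, div_le_iff₀ hn0] at hlo'
        exact hlo'
      have hcompl : (Finset.univ.filter (fun i => toFinT T hT0 u ≤ x i)) =
          (Finset.univ.filter (fun i => ¬ (x i ≤ toFinT T hT0 (u-1)))) := by
        apply Finset.filter_congr
        intro i _
        have hxi := (x i).isLt
        constructor
        · intro h h'
          have h1 : min u (T-1) ≤ (x i : ℕ) := h
          have h2 : (x i : ℕ) ≤ min (u-1) (T-1) := h'
          omega
        · intro h
          show min u (T-1) ≤ (x i : ℕ)
          by_contra hc
          exact h (show (x i : ℕ) ≤ min (u-1) (T-1) by omega)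
      have hsum := Finset.card_filter_add_card_filter_not
        (s := (Finset.univ : Finset (Fin n))) (p := fun i => x i ≤ toFinT T hT0 (u-1))
      rw [Finset.card_univ, Fintype.card_fin] at hsum
      rw [hcompl]
      have hle : (Finset.univ.filter (fun i => x i ≤ toFinT T hT0 (u-1))).card ≤ n := by
        omega
      have : ((Finset.univ.filter (fun i => ¬ (x i ≤ toFinT T hT0 (u-1)))).card : ℝ)
          = (n : ℝ) - ((Finset.univ.filter (fun i => x i ≤ toFinT T hT0 (u-1))).card : ℝ) := by
        have : (Finset.univ.filter (fun i => ¬ (x i ≤ toFinT T hT0 (u-1)))).card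
            = n - (Finset.univ.filter (fun i => x i ≤ toFinT T hT0 (u-1))).card := by omega
        rw [this, Nat.cast_sub hle]
      rw [this]
      linarith
  -- construct M'
  refine ⟨fun x => (M (bsA T hT0) x).map (bsF T hT0 K), ?_, ?_, ?_⟩
  · intro x
    haveI := hprob (bsA T hT0) x
    exact Measure.isProbabilityMeasure_map (measurable_bsF T hT0 K).aemeasurable
  · intro x x' hnb R
    have hR : MeasurableSet R := (Set.to_countable R).measurableSet
    rw [Measure.map_apply (measurable_bsF T hT0 K) hR,
      Measure.map_apply (measurable_bsF T hT0 K) hR]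
    exact hdp (bsA T hT0) x x' hnb _
  · intro x
    have hR : MeasurableSet {y : Fin T | approxMedian α x y} :=
      (Set.to_countable _).measurableSet
    rw [Measure.map_apply (measurable_bsF T hT0 K) hR]
    refine le_trans (hacc (bsA T hT0) x) (measure_mono ?_)
    intro as h
    exact key x as h
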